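/- Every solution a in the quadratic order O₉ = ℤ + ℤ·3·((-1+√5)/2) ⊂ ℚ(√5) of the norm equation Nm(a) = -9 is of the form a = ±3·u_f^(2n+1) for some integer n, where u_f = (1+√5)/2 is the fundamental unit of the ring of integers of ℚ(√5). -/
import Mathlib

noncomputable def phig : ℝ := (1 + Real.sqrt 5) / 2

lemma s5 : Real.sqrt 5 ^ 2 = 5 := Real.sq_sqrt (by norm_num)

lemma phig_sq : phig ^ 2 = phig + 1 := by
  have h := s5; unfold phig; nlinarith [Real.sqrt_nonneg 5]

lemma phig_pos : 0 < phig := by unfold phig; positivity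

/-- Descent: every nonnegative solution of `s² + st - t² = ±1` is a power of the golden
ratio `φ = (1+√5)/2`, with the sign of the norm determined by the parity of the exponent. -/
lemma keydesc : ∀ N : ℕ, ∀ s t : ℤ, 0 ≤ s → 0 ≤ t → s + t ≤ (N:ℤ) →
    (s^2 + s*t - t^2 = 1 ∨ s^2 + s*t - t^2 = -1) →
    ∃ j : ℕ, (s:ℝ) + t * phig = phig ^ j ∧ s^2 + s*t - t^2 = (-1)^j := by
  intro N
  induction N with
  | zero =>
    intro s t hs ht hN he
    have h1 : s = 0 := by omega
    have h2 : t = 0 := by omega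
    subst h1; subst h2
    rcases he with h|h <;> omega
  | succ N ih =>
    intro s t hs ht hN he
    rcases eq_or_lt_of_le hs with h0|hs1
    · have hs0 : s = 0 := h0.symm
      subst hs0
      have ht1 : t = 1 := by rcases he with h|h <;> nlinarith
      subst ht1
      refine ⟨1, by push_cast; ring, by norm_num⟩
    rcases eq_or_lt_of_le ht with h0|ht1
    · have ht0 : t = 0 := h0.symm
      subst ht0
      have hs0 : s = 1 := by rcases he with h|h <;> nlinarith
      subst hs0
      refine ⟨0, by push_cast; ring, by norm_num⟩
    · have hs' : 0 ≤ t - s := by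
        rcases he with h|h <;> nlinarith
      have hnorm : (t-s)^2 + (t-s)*s - s^2 = 1 ∨ (t-s)^2 + (t-s)*s - s^2 = -1 := by
        rcases he with h|h
        · right; linear_combination -h
        · left; linear_combination -h
      obtain ⟨j, hb, hp⟩ := ih (t - s) s hs' hs (by omega) hnorm
      refine ⟨j + 1, ?_, ?_⟩
      · rw [pow_succ, ← hb]
        push_cast
        linear_combination (-(s:ℝ)) * phig_sq
      · rw [pow_succ]
        linear_combination -hp

lemma odd_of_neg_one (j : ℕ) (h : ((-1:ℤ))^j = -1) : ∃ a : ℕ, j = 2*a + 1 := by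
  rcases Nat.even_or_odd j with he|ho
  · rw [he.neg_one_pow] at h; omega
  · obtain ⟨a, ha⟩ := ho; exact ⟨a, by omega⟩

lemma classify_t (s t : ℤ) (ht : 0 ≤ t) (h : s^2 + s*t - t^2 = -1) :
    ∃ (k : ℤ) (ε : ℝ), (ε = 1 ∨ ε = -1) ∧
      (s:ℝ) + t * phig = ε * phig ^ (2*k+1) := by
  rcases le_or_gt 0 s with hs|hs
  · obtain ⟨j, hb, hp⟩ := keydesc (s+t).toNat s t hs ht (by omega) (Or.inr h)
    rw [h] at hp
    obtain ⟨a, ha⟩ := odd_of_neg_one j hp.symm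
    refine ⟨(a:ℤ), 1, Or.inl rfl, ?_⟩
    rw [one_mul, show (2*(a:ℤ)+1) = (j:ℤ) by omega, zpow_natCast]
    exact hb
  · have hst : s + t ≤ 0 := by nlinarith [sq_nonneg (s+t), sq_nonneg t, sq_nonneg s]
    have hnorm : (-(s+t))^2 + (-(s+t))*t - t^2 = -1 := by linear_combination h
    obtain ⟨j, hb, hp⟩ := keydesc (-(s+t)+t).toNat (-(s+t)) t (by omega) ht (by omega)
      (Or.inr hnorm)
    rw [hnorm] at hp
    obtain ⟨a, ha⟩ := odd_of_neg_one j hp.symm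
    refine ⟨-(a:ℤ) - 1, 1, Or.inl rfl, ?_⟩
    have hr : (s:ℝ)^2 + s*t - t^2 = -1 := by exact_mod_cast h
    have hmul : ((s:ℝ) + t * phig) * (phig ^ j) = 1 := by
      rw [← hb]
      push_cast
      linear_combination (t:ℝ)^2 * phig_sq - hr
    rw [one_mul, show (2*(-(a:ℤ)-1)+1) = -(j:ℤ) by omega, zpow_neg, zpow_natCast]
    exact eq_inv_of_mul_eq_one_left hmul

/-- Every element `s + tφ ∈ ℤ[φ]` of norm `-1` is `± φ^(2k+1)`. -/
lemma classify (s t : ℤ) (h : s^2 + s*t - t^2 = -1) :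
    ∃ (k : ℤ) (ε : ℝ), (ε = 1 ∨ ε = -1) ∧
      (s:ℝ) + t * phig = ε * phig ^ (2*k+1) := by
  rcases le_or_gt 0 t with ht|ht
  · exact classify_t s t ht h
  · obtain ⟨k, ε, hε, heq⟩ := classify_t (-s) (-t) (by omega) (by linear_combination h)
    refine ⟨k, -ε, by rcases hε with h|h <;> simp [h], ?_⟩
    push_cast at heq
    linear_combination -heq

/-- Case `k = 9` of Proposition 4.2: every element `a = m + n·3·(-1+√5)/2` of the order
`O₉ = ℤ + ℤ·3(-1+√5)/2 ⊂ ℚ(√5)` with norm `-9` equals `±3·u_f^(2n+1)`, where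
`u_f = (1+√5)/2` is the fundamental unit. -/
theorem stmt4 (m n : ℤ)
    (h : ((m : ℚ) - 3 * n / 2)^2 - 5 * (3 * (n : ℚ) / 2)^2 = -9) :
    ∃ (k : ℤ) (ε : ℝ), (ε = 1 ∨ ε = -1) ∧
      ((m : ℝ) - 3 * n / 2) + (3 * n / 2) * Real.sqrt 5 =
        ε * 3 * (((1 + Real.sqrt 5) / 2) ^ (2 * k + 1)) := by
  have hz : (2*m - 3*n)^2 - 45*n^2 = -36 := by
    have h4 : ((2*m - 3*n : ℤ) : ℚ)^2 - 45*(n:ℚ)^2 = -36 := by push_cast; linear_combination 4*h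
    exact_mod_cast h4
  have h3 : (3:ℤ) ∣ (2*m - 3*n) := by
    have hd : (3:ℤ) ∣ (2*m - 3*n)^2 := ⟨15*n^2 - 12, by linarith⟩
    exact Int.prime_three.dvd_of_dvd_pow hd
  obtain ⟨w, hw⟩ := h3
  have hw5 : w^2 - 5*n^2 = -4 := by
    have h9 : 9*(w^2 - 5*n^2) = -36 := by linear_combination hz - (2*m - 3*n + 3*w) * hw
    linarith
  have hpar : (2:ℤ) ∣ (w - n) := by
    rcases Int.even_or_odd w with ⟨a,ha⟩|⟨a,ha⟩ <;> rcases Int.even_or_odd n with ⟨b,hb⟩|⟨b,hb⟩ <;>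
      omega
  obtain ⟨s, hsdef⟩ := hpar
  have hnorm : s^2 + s*n - n^2 = -1 := by
    have h4 : 4*(s^2 + s*n - n^2) = -4 := by linear_combination hw5 - (w + n + 2*s) * hsdef
    linarith
  obtain ⟨k, ε, hε, heq⟩ := classify s n hnorm
  have hm : m = 3*s + 3*n := by omega
  refine ⟨k, ε, hε, ?_⟩
  unfold phig at heq
  have hL : ((m:ℝ) - 3*n/2) + (3*n/2)*Real.sqrt 5 = 3*((s:ℝ) + n*((1+Real.sqrt 5)/2)) := by
    rw [hm]; push_cast; ring
  rw [hL, heq]; ring
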